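/- Let π : P → M be a principal G-bundle with representation ρ : G → GL(V), f ∈ L^k(V)^G a G-invariant k-linear form, and ψ_i ∈ Ω^{p_i}_hor(P; V)^G horizontal equivariant forms. If there exists a principal connection ω on P such that d_ω ψ_i = 0 for all i = 1,…,k, then the basic form f^{ψ₁,…,ψ_k} = f ∘ (ψ₁ ⊗_∧ ⋯ ⊗_∧ ψ_k) is closed: d(f^{ψ₁,…,ψ_k}) = 0. -/

import Mathlib

/-!
STATEMENT 7: If f ∈ L^k(V)^G is invariant and ψᵢ ∈ Ω^{pᵢ}_hor(P;V)^G satisfy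
d_ωψᵢ = 0 for some principal connection ω, then f^{ψ₁,…,ψ_k} is closed.
Axiomatized setting: P with tangent spaces T x; the exterior derivatives of
the ψᵢ and of f^{ψ₁,…,ψ_k} are given as data (dψ, dF), subject to the usual
Leibniz rule for d(f ∘ (ψ₁ ⊗_∧ ⋯ ⊗_∧ ψ_k)); invariance of f is taken in the
infinitesimal form of 1.2; d_ωψᵢ = 0 reads dψᵢ = −ρ'_∧(ω)ψᵢ. -/

noncomputable section

open scoped BigOperators

attribute [local instance 100] LieRing.ofAssociativeRing

variable {P : Type*} {T : P → Type*}
  [∀ x, AddCommGroup (T x)] [∀ x, Module ℝ (T x)]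
  {g V : Type*} [LieRing g] [LieAlgebra ℝ g]
  [AddCommGroup V] [Module ℝ V]

lemma blkIdx_lt {k : ℕ} (p : Fin k → ℕ) (i : Fin k) (j : Fin (p i)) :
    (∑ l ∈ Finset.Iio i, p l) + j.1 < ∑ l, p l := by
  have h1 : ∑ l ∈ Finset.Iio i, p l ≤ ∑ l ∈ Finset.univ.erase i, p l :=
    Finset.sum_le_sum_of_subset
      (fun l hl => Finset.mem_erase.2 ⟨(Finset.mem_Iio.1 hl).ne, Finset.mem_univ l⟩)
  have h2 : p i + ∑ l ∈ Finset.univ.erase i, p l = ∑ l, p l :=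
    Finset.add_sum_erase _ p (Finset.mem_univ i)
  have := j.2; omega

def blkIdx {k : ℕ} (p : Fin k → ℕ) (i : Fin k) (j : Fin (p i)) : Fin (∑ l, p l) :=
  ⟨(∑ l ∈ Finset.Iio i, p l) + j.1, blkIdx_lt p i j⟩

/-- `f ∘ (ψ₁ ⊗_∧ ⋯ ⊗_∧ ψ_k)` as a form on `P`. -/
def bigProdP {k : ℕ} (f : MultilinearMap ℝ (fun _ : Fin k => V) ℝ)
    (p : Fin k → ℕ) (ψ : ∀ (i : Fin k) (x : P), (Fin (p i) → T x) → V)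
    (x : P) : (Fin (∑ l, p l) → T x) → ℝ := fun u =>
  ((∏ l, ((p l).factorial : ℝ)))⁻¹ *
    ∑ σ : Equiv.Perm (Fin (∑ l, p l)),
      ((Equiv.Perm.sign σ : ℤ) : ℝ) *
        f (fun i => ψ i x (fun j => u (σ (blkIdx p i j))))

/-- The wedge-action `ρ'_∧(ω)ψ` of the connection form on a `V`-valued form. -/
def act1P (ρ' : g →ₗ⁅ℝ⁆ Module.End ℝ V) (ω : ∀ x : P, T x →ₗ[ℝ] g) (q : ℕ)
    (ψ : ∀ x : P, (Fin q → T x) → V) (x : P) : (Fin (q + 1) → T x) → V := fun u =>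
  ∑ j : Fin (q + 1), ((-1 : ℝ)) ^ (j : ℕ) •
    ρ' (ω x (u j)) (ψ x fun l => u (j.succAbove l))

/-- The family `ψ` with its `i₀`-th member replaced by the `(p i₀ + 1)`-form `χ`. -/
def updPsiP {k : ℕ} (p : Fin k → ℕ)
    (ψ : ∀ (i : Fin k) (x : P), (Fin (p i) → T x) → V) (i₀ : Fin k)
    (χ : ∀ x : P, (Fin (p i₀ + 1) → T x) → V) :
    ∀ (i : Fin k) (x : P), (Fin (Function.update p i₀ (p i₀ + 1) i) → T x) → V :=
  fun i x u =>
    if h : i = i₀ then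
      χ x (fun j => u (Fin.cast (by subst h; simp) j))
    else
      ψ i x (fun j => u (Fin.cast (by simp [Function.update_of_ne h]) j))

/-! ### Auxiliary machinery for the proof -/

lemma cycleRange_val_aux {n : ℕ} (a t : Fin (n + 1)) :
    ((Fin.cycleRange a t : Fin (n + 1)) : ℕ) =
      if t.1 < a.1 then t.1 + 1 else if t.1 = a.1 then 0 else t.1 := by
  rcases lt_trichotomy t.1 a.1 with h | h | h
  · rw [if_pos h, Fin.coe_cycleRange_of_lt (Fin.lt_def.2 h)]
  · have ht : t = a := Fin.ext h
    subst ht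
    simp
  · rw [Fin.cycleRange_of_gt (Fin.lt_def.2 h), if_neg (by omega), if_neg (by omega)]

lemma succAbove_val_aux {n : ℕ} (q : Fin (n + 1)) (m : Fin n) :
    ((q.succAbove m : Fin (n + 1)) : ℕ) = if m.1 < q.1 then m.1 else m.1 + 1 := by
  rcases lt_or_ge m.1 q.1 with h | h
  · rw [Fin.succAbove_of_castSucc_lt _ _ (by simpa [Fin.lt_def] using h), if_pos h]; rfl
  · rw [Fin.succAbove_of_le_castSucc _ _ (by simpa [Fin.le_def] using h), if_neg (by omega)]; rfl

/-- The canonical family of `V`-values obtained from `ψ` and a permutation of `Fin (N+1)`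
(slot `0` is reserved for the connection argument). -/
def canonV {k : ℕ} (p : Fin k → ℕ)
    (ψ : ∀ (i : Fin k) (x : P), (T x) [⋀^Fin (p i)]→ₗ[ℝ] V)
    (x : P) (u : Fin ((∑ l, p l) + 1) → T x)
    (σ : Equiv.Perm (Fin ((∑ l, p l) + 1))) (l : Fin k) : V :=
  ψ l x (fun m => u (σ ⟨1 + (∑ q ∈ Finset.Iio l, p q) + m.1,
    by have := blkIdx_lt p l m; omega⟩))

lemma bigProdP_cast {k : ℕ} (f : MultilinearMap ℝ (fun _ : Fin k => V) ℝ)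
    (q : Fin k → ℕ) (Ψ : ∀ (i : Fin k) (x : P), (Fin (q i) → T x) → V)
    (x : P) {n : ℕ} (hc : (∑ l, q l) = n) (u : Fin n → T x) :
    bigProdP f q Ψ x (fun j => u (Fin.cast hc j))
    = ((∏ l, ((q l).factorial : ℝ)))⁻¹ *
      ∑ σ : Equiv.Perm (Fin n),
        ((Equiv.Perm.sign σ : ℤ) : ℝ) *
          f (fun i => Ψ i x (fun j => u (σ (Fin.cast hc (blkIdx q i j))))) := by
  unfold bigProdP
  congr 1
  refine Fintype.sum_equiv ((finCongr hc).permCongr) _ _ (fun σ => ?_)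
  rw [Equiv.Perm.sign_permCongr]
  congr 1

lemma sum_perm_mulRight {α : Type*} [Fintype α] [DecidableEq α]
    (π : Equiv.Perm α) (h : Equiv.Perm α → ℝ) :
    ∑ σ : Equiv.Perm α, h σ = ∑ σ : Equiv.Perm α, h (σ * π) :=
  (Fintype.sum_equiv (Equiv.mulRight π) (fun σ => h (σ * π)) h (fun _ => rfl)).symm

lemma posb_lt {k : ℕ} (p : Fin k → ℕ) (i : Fin k) (t : Fin (p i + 1)) :
    (∑ q ∈ Finset.Iio i, p q) + t.1 < (∑ l, p l) + 1 := by
  have hsub : insert i (Finset.Iio i) ⊆ Finset.univ := fun q _ => Finset.mem_univ q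
  have h := Finset.sum_le_sum_of_subset (f := p) hsub
  rw [Finset.sum_insert (by simp)] at h
  have := t.2
  omega

def posb {k : ℕ} (p : Fin k → ℕ) (i : Fin k) (t : Fin (p i + 1)) :
    Fin ((∑ l, p l) + 1) :=
  ⟨(∑ q ∈ Finset.Iio i, p q) + t.1, posb_lt p i t⟩

lemma term_eq {k : ℕ}
    (ρ' : g →ₗ⁅ℝ⁆ Module.End ℝ V)
    (f : MultilinearMap ℝ (fun _ : Fin k => V) ℝ)
    (ω : ∀ x : P, T x →ₗ[ℝ] g)
    (p : Fin k → ℕ) (ψ : ∀ (i : Fin k) (x : P), (T x) [⋀^Fin (p i)]→ₗ[ℝ] V)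
    (i : Fin k) (dψi : ∀ x : P, (Fin (p i + 1) → T x) → V)
    (x : P) (u : Fin ((∑ l, p l) + 1) → T x)
    (hd : ∀ u' : Fin (p i + 1) → T x,
      dψi x u' = - act1P ρ' ω (p i) (fun x => ⇑(ψ i x)) x u')
    (hc : (∑ l, Function.update p i (p i + 1) l) = (∑ l, p l) + 1) :
    (-1 : ℝ) ^ (∑ l ∈ Finset.Iio i, p l) *
      bigProdP f (Function.update p i (p i + 1))
        (updPsiP p (fun l x => ⇑(ψ l x)) i dψi) x (fun j => u (Fin.cast hc j))
    = (∏ l, ((p l).factorial : ℝ))⁻¹ *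
      ∑ σ : Equiv.Perm (Fin ((∑ l, p l) + 1)),
        ((Equiv.Perm.sign σ : ℤ) : ℝ) *
          (-(f (Function.update (canonV p ψ x u σ) i
              (ρ' (ω x (u (σ 0))) (canonV p ψ x u σ i))))) := by
  classical
  have hmono : ∀ a b : Fin k, a < b →
      (∑ q ∈ Finset.Iio a, p q) + p a ≤ ∑ q ∈ Finset.Iio b, p q := by
    intro a b hab
    have hsub : insert a (Finset.Iio a) ⊆ Finset.Iio b := by
      intro q hq
      rcases Finset.mem_insert.1 hq with h | h
      · exact Finset.mem_Iio.2 (h ▸ hab)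
      · exact Finset.mem_Iio.2 ((Finset.mem_Iio.1 h).trans hab)
    have h := Finset.sum_le_sum_of_subset (f := p) hsub
    rw [Finset.sum_insert (by simp)] at h
    omega
  have hsle : ∀ l : Fin k, l ≤ i →
      (∑ q ∈ Finset.Iio l, Function.update p i (p i + 1) q) = ∑ q ∈ Finset.Iio l, p q :=
    fun l hl => Finset.sum_congr rfl fun q hq =>
      Function.update_of_ne (((Finset.mem_Iio.1 hq).trans_le hl).ne) _ _
  have hsgt : ∀ l : Fin k, i < l →
      (∑ q ∈ Finset.Iio l, Function.update p i (p i + 1) q) =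
        (∑ q ∈ Finset.Iio l, p q) + 1 := by
    intro l hl
    rw [Finset.sum_update_of_mem (Finset.mem_Iio.2 hl), ← Finset.erase_eq]
    have h := Finset.add_sum_erase (Finset.Iio l) p (Finset.mem_Iio.2 hl)
    omega
  rw [bigProdP_cast]
  -- Step 1 : expand the `i`-th slot using `hd`.
  have step1 : ∀ σ : Equiv.Perm (Fin ((∑ l, p l) + 1)),
      f (fun l => updPsiP p (fun l x => ⇑(ψ l x)) i dψi l x
          (fun m => u (σ (Fin.cast hc (blkIdx (Function.update p i (p i + 1)) l m)))))
      = ∑ j : Fin (p i + 1),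
          -(((-1 : ℝ)) ^ (j : ℕ) *
            f (Function.update
                (fun l => updPsiP p (fun l x => ⇑(ψ l x)) i dψi l x
                  (fun m => u (σ (Fin.cast hc
                    (blkIdx (Function.update p i (p i + 1)) l m))))) i
                (ρ' (ω x (u (σ (posb p i j))))
                  (ψ i x fun m => u (σ (posb p i (j.succAbove m))))))) := by
    intro σ
    set W : Fin k → V := fun l => updPsiP p (fun l x => ⇑(ψ l x)) i dψi l x
      (fun m => u (σ (Fin.cast hc (blkIdx (Function.update p i (p i + 1)) l m)))) with hWdef
    have hWi : W i = - ∑ j : Fin (p i + 1), ((-1 : ℝ)) ^ (j : ℕ) •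
        ρ' (ω x (u (σ (posb p i j))))
          (ψ i x fun m => u (σ (posb p i (j.succAbove m)))) := by
      have h1 : W i = dψi x (fun j => u (σ (posb p i j))) := by
        show updPsiP p (fun l x => ⇑(ψ l x)) i dψi i x _ = _
        simp only [updPsiP]
        rw [dif_pos trivial]
        congr 1
        funext j
        exact congrArg u (congrArg σ (Fin.ext (by
          simp [blkIdx, posb, hsle i le_rfl])))
      rw [h1, hd, act1P]
    have h2 : f W = f (Function.update W i (W i)) := by
      rw [Function.update_eq_self]
    rw [h2, hWi, MultilinearMap.map_update_neg, MultilinearMap.map_update_sum]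
    rw [← Finset.sum_neg_distrib]
    refine Finset.sum_congr rfl fun j _ => ?_
    rw [MultilinearMap.map_update_smul, smul_eq_mul]
  -- Step 2 : reindex by the cycle moving the distinguished slot to the front.
  have step2 : ∀ j : Fin (p i + 1),
      (∑ σ : Equiv.Perm (Fin ((∑ l, p l) + 1)),
        ((Equiv.Perm.sign σ : ℤ) : ℝ) *
          f (Function.update
              (fun l => updPsiP p (fun l x => ⇑(ψ l x)) i dψi l x
                (fun m => u (σ (Fin.cast hc
                  (blkIdx (Function.update p i (p i + 1)) l m))))) i
              (ρ' (ω x (u (σ (posb p i j))))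
                (ψ i x fun m => u (σ (posb p i (j.succAbove m)))))))
      = ((-1 : ℝ)) ^ ((∑ q ∈ Finset.Iio i, p q) + j.1) *
        ∑ σ : Equiv.Perm (Fin ((∑ l, p l) + 1)),
          ((Equiv.Perm.sign σ : ℤ) : ℝ) *
            f (Function.update (canonV p ψ x u σ) i
              (ρ' (ω x (u (σ 0))) (canonV p ψ x u σ i))) := by
    intro j
    rw [sum_perm_mulRight (Fin.cycleRange (posb p i j)), Finset.mul_sum]
    refine Finset.sum_congr rfl fun σ _ => ?_
    have hsgn : ((Equiv.Perm.sign (σ * Fin.cycleRange (posb p i j)) : ℤ) : ℝ)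
        = ((-1 : ℝ)) ^ ((∑ q ∈ Finset.Iio i, p q) + j.1) *
          ((Equiv.Perm.sign σ : ℤ) : ℝ) := by
      rw [Equiv.Perm.sign_mul, Fin.sign_cycleRange]
      rw [show ((posb p i j : Fin _) : ℕ) = (∑ q ∈ Finset.Iio i, p q) + j.1 from rfl]
      push_cast
      ring
    have hupd : Function.update
        (fun l => updPsiP p (fun l x => ⇑(ψ l x)) i dψi l x
          (fun m => u ((σ * Fin.cycleRange (posb p i j)) (Fin.cast hc
            (blkIdx (Function.update p i (p i + 1)) l m))))) i
        (ρ' (ω x (u ((σ * Fin.cycleRange (posb p i j)) (posb p i j))))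
          (ψ i x fun m => u ((σ * Fin.cycleRange (posb p i j))
            (posb p i (j.succAbove m)))))
        = Function.update (canonV p ψ x u σ) i
            (ρ' (ω x (u (σ 0))) (canonV p ψ x u σ i)) := by
      funext l
      rcases eq_or_ne l i with rfl | hne
      · rw [Function.update_self, Function.update_self]
        congr 1
        · congr 2
          rw [Equiv.Perm.mul_apply]
          refine congrArg u (congrArg σ (Fin.ext ?_))
          rw [cycleRange_val_aux]
          simp [posb]
        · simp only [canonV]
          congr 1
          funext m
          refine congrArg u ?_
          rw [Equiv.Perm.mul_apply]
          refine congrArg σ (Fin.ext ?_)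
          rw [cycleRange_val_aux]
          have hs := succAbove_val_aux j m
          simp only [posb]
          simp only [hs]
          have := m.2
          split_ifs <;> omega
      · simp only [Function.update_of_ne hne]
        show updPsiP p (fun l x => ⇑(ψ l x)) i dψi l x _ = _
        simp only [updPsiP, dif_neg hne]
        simp only [canonV]
        congr 1
        funext m
        refine congrArg u ?_
        rw [Equiv.Perm.mul_apply]
        refine congrArg σ (Fin.ext ?_)
        rw [cycleRange_val_aux]
        simp only [blkIdx, posb, Fin.coe_cast]
        rcases lt_or_ge l i with hli | hil
        · simp only [hsle l hli.le]
          have h1 := hmono l i hli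
          have h2 := m.2
          have h3 := j.2
          split_ifs <;> omega
        · have hlt : i < l := lt_of_le_of_ne hil (Ne.symm hne)
          simp only [hsgt l hlt]
          have h1 := hmono i l hlt
          have h2 := m.2
          have h3 := j.2
          split_ifs <;> omega
    beta_reduce
    rw [hsgn, hupd]
    ring
  -- Put everything together.
  have h1 : (∑ σ : Equiv.Perm (Fin ((∑ l, p l) + 1)),
        ((Equiv.Perm.sign σ : ℤ) : ℝ) *
          f (fun l => updPsiP p (fun l x => ⇑(ψ l x)) i dψi l x
            (fun m => u (σ (Fin.cast hc
              (blkIdx (Function.update p i (p i + 1)) l m))))))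
      = ∑ σ : Equiv.Perm (Fin ((∑ l, p l) + 1)), ∑ j : Fin (p i + 1),
          -(((-1 : ℝ)) ^ (j : ℕ) * (((Equiv.Perm.sign σ : ℤ) : ℝ) *
            f (Function.update
                (fun l => updPsiP p (fun l x => ⇑(ψ l x)) i dψi l x
                  (fun m => u (σ (Fin.cast hc
                    (blkIdx (Function.update p i (p i + 1)) l m))))) i
                (ρ' (ω x (u (σ (posb p i j))))
                  (ψ i x fun m => u (σ (posb p i (j.succAbove m)))))))) := by
    refine Finset.sum_congr rfl fun σ _ => ?_
    rw [step1 σ, Finset.mul_sum]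
    refine Finset.sum_congr rfl fun j _ => by ring
  rw [h1, Finset.sum_comm]
  have h3 : ∀ j : Fin (p i + 1),
      (∑ σ : Equiv.Perm (Fin ((∑ l, p l) + 1)),
        -(((-1 : ℝ)) ^ (j : ℕ) * (((Equiv.Perm.sign σ : ℤ) : ℝ) *
          f (Function.update
              (fun l => updPsiP p (fun l x => ⇑(ψ l x)) i dψi l x
                (fun m => u (σ (Fin.cast hc
                  (blkIdx (Function.update p i (p i + 1)) l m))))) i
              (ρ' (ω x (u (σ (posb p i j))))
                (ψ i x fun m => u (σ (posb p i (j.succAbove m)))))))))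
      = -(((-1 : ℝ)) ^ (∑ q ∈ Finset.Iio i, p q) *
          ∑ σ : Equiv.Perm (Fin ((∑ l, p l) + 1)),
            ((Equiv.Perm.sign σ : ℤ) : ℝ) *
              f (Function.update (canonV p ψ x u σ) i
                (ρ' (ω x (u (σ 0))) (canonV p ψ x u σ i)))) := by
    intro j
    rw [Finset.sum_neg_distrib, ← Finset.mul_sum, step2 j]
    have hEj : ((-1 : ℝ)) ^ (j.1) * ((-1 : ℝ)) ^ (j.1) = 1 := by
      rw [← pow_add]
      exact Even.neg_one_pow ⟨_, rfl⟩
    have hp : ((-1 : ℝ)) ^ ((∑ q ∈ Finset.Iio i, p q) + j.1)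
        = ((-1 : ℝ)) ^ (∑ q ∈ Finset.Iio i, p q) * ((-1 : ℝ)) ^ (j.1) := pow_add _ _ _
    rw [hp]
    set Sp := ∑ σ : Equiv.Perm (Fin ((∑ l, p l) + 1)),
      ((Equiv.Perm.sign σ : ℤ) : ℝ) *
        f (Function.update (canonV p ψ x u σ) i
          (ρ' (ω x (u (σ 0))) (canonV p ψ x u σ i))) with hSp
    linear_combination (-(((-1 : ℝ)) ^ (∑ q ∈ Finset.Iio i, p q)) * Sp) * hEj
  rw [Finset.sum_congr rfl (fun j _ => h3 j), Finset.sum_const]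
  have hcard : (Finset.univ : Finset (Fin (p i + 1))).card = p i + 1 := by simp
  rw [hcard]
  have hC : (∏ l, ((Function.update p i (p i + 1) l).factorial : ℝ))⁻¹ *
      ((p i : ℝ) + 1) = (∏ l, ((p l).factorial : ℝ))⁻¹ := by
    rw [← Finset.mul_prod_erase Finset.univ
        (fun l => (((Function.update p i (p i + 1)) l).factorial : ℝ)) (Finset.mem_univ i),
      ← Finset.mul_prod_erase Finset.univ
        (fun l => (((p l).factorial : ℝ))) (Finset.mem_univ i)]
    rw [Finset.prod_congr rfl (fun l hl => by
      rw [Function.update_of_ne (Finset.mem_erase.1 hl).1])]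
    rw [Function.update_self, Nat.factorial_succ]
    have h1 : ((p i).factorial : ℝ) ≠ 0 := Nat.cast_ne_zero.2 (Nat.factorial_ne_zero _)
    have h2 : (∏ l ∈ Finset.univ.erase i, ((p l).factorial : ℝ)) ≠ 0 :=
      Finset.prod_ne_zero_iff.2 fun l _ => Nat.cast_ne_zero.2 (Nat.factorial_ne_zero _)
    rw [mul_inv, mul_inv]
    push_cast
    field_simp
  have hE : ((-1 : ℝ)) ^ (∑ q ∈ Finset.Iio i, p q) *
      ((-1 : ℝ)) ^ (∑ q ∈ Finset.Iio i, p q) = 1 := by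
    rw [← pow_add]
    exact Even.neg_one_pow ⟨_, rfl⟩
  set Sp := ∑ σ : Equiv.Perm (Fin ((∑ l, p l) + 1)),
    ((Equiv.Perm.sign σ : ℤ) : ℝ) *
      f (Function.update (canonV p ψ x u σ) i
        (ρ' (ω x (u (σ 0))) (canonV p ψ x u σ i))) with hSp
  have hRHS : (∑ σ : Equiv.Perm (Fin ((∑ l, p l) + 1)),
      ((Equiv.Perm.sign σ : ℤ) : ℝ) *
        (-(f (Function.update (canonV p ψ x u σ) i
          (ρ' (ω x (u (σ 0))) (canonV p ψ x u σ i)))))) = -Sp := by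
    rw [hSp, ← Finset.sum_neg_distrib]
    exact Finset.sum_congr rfl fun σ _ => by ring
  rw [hRHS]
  rw [nsmul_eq_mul]
  push_cast
  set A := (∏ l, ((Function.update p i (p i + 1) l).factorial : ℝ))⁻¹ with hA
  set B := (∏ l, ((p l).factorial : ℝ))⁻¹ with hB
  linear_combination (-(Sp) * (A * ((p i : ℝ) + 1))) * hE - Sp * hC


theorem basic_form_closed {k : ℕ}
    (ρ' : g →ₗ⁅ℝ⁆ Module.End ℝ V)
    -- the invariant k-linear form (infinitesimal invariance, 1.2):
    (f : MultilinearMap ℝ (fun _ : Fin k => V) ℝ)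
    (hf : ∀ (X : g) (v : Fin k → V),
      ∑ i : Fin k, f (Function.update v i (ρ' X (v i))) = 0)
    -- a principal connection:
    (ω : ∀ x : P, T x →ₗ[ℝ] g)
    -- the forms ψᵢ and their exterior derivatives:
    (p : Fin k → ℕ) (ψ : ∀ (i : Fin k) (x : P), (T x) [⋀^Fin (p i)]→ₗ[ℝ] V)
    (dψ : ∀ (i : Fin k) (x : P), (Fin (p i + 1) → T x) → V)
    -- the exterior derivative of F = f^{ψ₁,…,ψ_k} and the Leibniz rule for it:
    (dF : ∀ x : P, (Fin ((∑ l, p l) + 1) → T x) → ℝ)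
    (hLeib : ∀ (x : P) (u : Fin ((∑ l, p l) + 1) → T x),
      dF x u = ∑ i : Fin k, ((-1 : ℝ)) ^ (∑ l ∈ Finset.Iio i, p l) *
        bigProdP f (Function.update p i (p i + 1))
          (updPsiP p (fun l x => ⇑(ψ l x)) i (dψ i)) x
          (fun j => u (Fin.cast
            (by rw [Finset.sum_update_of_mem (Finset.mem_univ i), ← Finset.erase_eq,
                  ← Finset.add_sum_erase Finset.univ p (Finset.mem_univ i)]
                omega) j)))
    -- d_ωψᵢ = 0, i.e. dψᵢ = −ρ'_∧(ω)ψᵢ :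
    (htors : ∀ (i : Fin k) (x : P) (u : Fin (p i + 1) → T x),
      dψ i x u = - act1P ρ' ω (p i) (fun x => ⇑(ψ i x)) x u) :
    -- then f^{ψ₁,…,ψ_k} is closed:
    ∀ (x : P) (u : Fin ((∑ l, p l) + 1) → T x), dF x u = 0 := by
  intro x u
  rw [hLeib x u]
  refine (Finset.sum_congr rfl (fun i _ =>
    term_eq ρ' f ω p ψ i (dψ i) x u (htors i x) _)).trans ?_
  rw [← Finset.mul_sum, Finset.sum_comm]
  refine mul_eq_zero_of_right _ (Finset.sum_eq_zero (fun σ _ => ?_))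
  rw [← Finset.mul_sum, Finset.sum_neg_distrib,
    hf (ω x (u (σ 0))) (canonV p ψ x u σ), neg_zero, mul_zero]

end
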